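/- There is no finite bipartite graph G whose slide γ-graph S(G, γ) is isomorphic to the complete bipartite graph K_{2,3}. -/

import Mathlib

/-- `D` is a dominating set of `G`: every vertex is in the closed neighbourhood of `D`. -/
def Dominates {V : Type*} (G : SimpleGraph V) (D : Finset V) : Prop :=
  ∀ v : V, ∃ d ∈ D, d = v ∨ G.Adj d v

/-- `D` is a γ-set: a dominating set of minimum cardinality. -/
def IsGammaSet {V : Type*} (G : SimpleGraph V) (D : Finset V) : Prop :=
  Dominates G D ∧ ∀ D' : Finset V, Dominates G D' → D.card ≤ D'.card

/-- The private neighbours of `x` with respect to `D`: `N[x] − N[D − {x}]`. -/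
def pn {V : Type*} [DecidableEq V] (G : SimpleGraph V) (D : Finset V) (x : V) : Set V :=
  {y | (y = x ∨ G.Adj x y) ∧ ∀ d ∈ D.erase x, ¬ (d = y ∨ G.Adj d y)}

/-- The slide adjacency relation on γ-sets. -/
def SlideRel {V : Type*} [DecidableEq V] (G : SimpleGraph V)
    (D₁ D₂ : Finset V) : Prop :=
  ∃ x ∈ D₁, ∃ y ∈ D₂, G.Adj x y ∧ D₁.erase x = D₂.erase y

/-- The slide γ-graph `S(G, γ)` of `G`. -/
def slideGammaGraph {V : Type*} [DecidableEq V] (G : SimpleGraph V) :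
    SimpleGraph {D : Finset V // IsGammaSet G D} :=
  SimpleGraph.fromRel (fun D₁ D₂ => SlideRel G D₁.1 D₂.1)

section helpers
set_option linter.unusedSectionVars false
set_option linter.unusedVariables false
variable {V : Type*} [DecidableEq V] {G : SimpleGraph V}

lemma SlideRel.symm' {D1 D2 : Finset V} (h : SlideRel G D1 D2) : SlideRel G D2 D1 := by
  obtain ⟨x, hx, y, hy, hadj, heq⟩ := h
  exact ⟨y, hy, x, hx, hadj.symm, heq.symm⟩

lemma slide_struct {D1 D2 : Finset V} (h : SlideRel G D1 D2) :
    ∃ x y, x ∈ D1 ∧ x ∉ D2 ∧ y ∈ D2 ∧ y ∉ D1 ∧ G.Adj x y ∧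
      D2 = insert y (D1.erase x) ∧ D1 = insert x (D2.erase y) := by
  obtain ⟨x, hx, y, hy, hadj, heq⟩ := h
  have hxy : x ≠ y := hadj.ne
  have hyD1 : y ∉ D1 := by
    intro hyD1
    have : y ∈ D2.erase y := heq ▸ Finset.mem_erase.2 ⟨Ne.symm hxy, hyD1⟩
    simp at this
  have hxD2 : x ∉ D2 := by
    intro hxD2
    have : x ∈ D1.erase x := heq.symm ▸ Finset.mem_erase.2 ⟨hxy, hxD2⟩
    simp at this
  refine ⟨x, y, hx, hxD2, hy, hyD1, hadj, ?_, ?_⟩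
  · rw [heq, Finset.insert_erase hy]
  · rw [← heq, Finset.insert_erase hx]

lemma fin2_pigeon : ∀ a b c : Fin 2, a ≠ b → a ≠ c → b ≠ c → False := by decide

lemma no_tri (col : G.Coloring (Fin 2)) {a b c : V}
    (h1 : G.Adj a b) (h2 : G.Adj a c) (h3 : G.Adj b c) : False :=
  fin2_pigeon (col a) (col b) (col c) (col.valid h1) (col.valid h2) (col.valid h3)

lemma pn_witness {A : Finset V} (hA : IsGammaSet G A) {x : V} (hx : x ∈ A) :
    ∃ w, (x = w ∨ G.Adj x w) ∧ ∀ d ∈ A.erase x, ¬(d = w ∨ G.Adj d w) := by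
  have hnd : ¬ Dominates G (A.erase x) := by
    intro hd
    have h1 := hA.2 _ hd
    have h2 : (A.erase x).card = A.card - 1 := Finset.card_erase_of_mem hx
    have h3 : 1 ≤ A.card := Finset.card_pos.2 ⟨x, hx⟩
    omega
  unfold Dominates at hnd
  push_neg at hnd
  obtain ⟨w, hw⟩ := hnd
  have hw' : ∀ d ∈ A.erase x, ¬(d = w ∨ G.Adj d w) := by
    intro d hd h
    rcases h with h | h
    · exact (hw d hd).1 h
    · exact (hw d hd).2 h
  obtain ⟨d, hd, hdw⟩ := hA.1 w
  by_cases hdx : d = x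
  · exact ⟨w, hdx ▸ hdw, hw'⟩
  · exact absurd hdw (hw' d (Finset.mem_erase.2 ⟨hdx, hd⟩))

lemma ins_ne {A : Finset V} {x m y n : V} (hx : x ∈ A) (hm : m ∈ A)
    (hy : y ∉ A) (hn : n ∉ A) (hne : x ≠ m ∨ y ≠ n) :
    insert y (A.erase x) ≠ insert n (A.erase m) := by
  intro heq
  rcases hne with h | h
  · have hmL : m ∈ insert y (A.erase x) :=
      Finset.mem_insert.2 (Or.inr (Finset.mem_erase.2 ⟨Ne.symm h, hm⟩))
    rw [heq] at hmL
    rcases Finset.mem_insert.1 hmL with h' | h'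
    · exact hn (h' ▸ hm)
    · exact (Finset.mem_erase.1 h').1 rfl
  · have hyL : y ∈ insert y (A.erase x) := Finset.mem_insert_self _ _
    rw [heq] at hyL
    rcases Finset.mem_insert.1 hyL with h' | h'
    · exact h h'
    · exact hy (Finset.mem_erase.1 h').2

/-- Case |A\B| = 1, two "type 1" neighbours. -/
lemma ML2a (col : G.Coloring (Fin 2)) {A : Finset V} (hA : IsGammaSet G A)
    {α β y1 y2 : V} (hα : α ∈ A) (hβ : β ∉ A)
    (hBdom : Dominates G (insert β (A.erase α)))
    (hnadj : ¬ G.Adj α β)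
    (h1dom : Dominates G (insert y1 (A.erase α)))
    (h2dom : Dominates G (insert y2 (A.erase α)))
    (hy12 : y1 ≠ y2) (hαy1 : G.Adj α y1) (hαy2 : G.Adj α y2) : False := by
  obtain ⟨w, hw1, hw2⟩ := pn_witness hA hα
  rcases hw1 with h | hαw
  · obtain ⟨d, hd, hdw⟩ := hBdom w
    rcases Finset.mem_insert.1 hd with rfl | hd'
    · rcases hdw with h2 | h2
      · exact hβ (by rw [h2, ← h]; exact hα)
      · exact hnadj (h ▸ h2.symm)
    · exact hw2 d hd' hdw
  · have key : ∀ y : V, G.Adj α y → Dominates G (insert y (A.erase α)) → y = w := by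
      intro y hαy hydom
      obtain ⟨d, hd, hdw⟩ := hydom w
      rcases Finset.mem_insert.1 hd with rfl | hd'
      · rcases hdw with rfl | h
        · rfl
        · exact (no_tri col hαy hαw h).elim
      · exact absurd hdw (hw2 d hd')
    exact hy12 ((key y1 hαy1 h1dom).trans (key y2 hαy2 h2dom).symm)

/-- Case |A\B| = 1, two "type 2" neighbours. -/
lemma ML2b (col : G.Coloring (Fin 2)) {A : Finset V} (hA : IsGammaSet G A)
    {x1 x2 α β : V} (hx1 : x1 ∈ A) (hx2 : x2 ∈ A) (hx12 : x1 ≠ x2)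
    (hα : α ∈ A) (hβ : β ∉ A)
    (hx1α : G.Adj x1 α) (hx1β : G.Adj x1 β) (hx2β : G.Adj x2 β)
    (hdom : Dominates G (insert β (A.erase x1))) : False := by
  obtain ⟨w, hw1, hw2⟩ := pn_witness hA hx1
  rcases hw1 with rfl | hx1w
  · exact hw2 α (Finset.mem_erase.2 ⟨fun h => G.irrefl (h ▸ hx1α), hα⟩) (Or.inr hx1α.symm)
  · obtain ⟨d, hd, hdw⟩ := hdom w
    rcases Finset.mem_insert.1 hd with rfl | hd'
    · rcases hdw with rfl | h
      · exact hw2 x2 (Finset.mem_erase.2 ⟨Ne.symm hx12, hx2⟩) (Or.inr hx2β)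
      · exact no_tri col hx1β hx1w h
    · exact hw2 d hd' hdw

/-- Case |A\B| = 2 master lemma; missing pair is (q, s). -/
lemma ML4 (col : G.Coloring (Fin 2)) (A B D1 D2 D3 : Finset V)
    (hA : IsGammaSet G A) {p q r s : V}
    (hp : p ∈ A) (hq : q ∈ A) (hpq : p ≠ q) (hr : r ∉ A) (hs : s ∉ A) (hrs : r ≠ s)
    (hAB : A \ B = {p, q})
    (hpr : G.Adj p r) (hps : G.Adj p s) (hqr : G.Adj q r) (hqs : G.Adj q s)
    (h1 : D1 = insert r (A.erase p)) (h2 : D2 = insert s (A.erase p))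
    (h3 : D3 = insert r (A.erase q))
    (hD3dom : Dominates G D3)
    (hall : ∀ D : Finset V, IsGammaSet G D → D = A ∨ D = B ∨ D = D1 ∨ D = D2 ∨ D = D3) :
    False := by
  have hqs' : q ≠ s := fun h => hs (h ▸ hq)
  have hsAq : s ∉ A.erase q := fun h => hs (Finset.mem_erase.1 h).2
  have hcard : (insert s (A.erase q)).card = A.card := by
    rw [Finset.card_insert_of_notMem hsAq, Finset.card_erase_of_mem hq]
    have : 1 ≤ A.card := Finset.card_pos.2 ⟨q, hq⟩
    omega
  have hnotdom : ¬ Dominates G (insert s (A.erase q)) := by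
    intro hdom
    have hgam : IsGammaSet G (insert s (A.erase q)) := ⟨hdom, fun D' hD' => hcard ▸ hA.2 D' hD'⟩
    rcases hall _ hgam with h | h | h | h | h
    · have : q ∈ insert s (A.erase q) := by rw [h]; exact hq
      rcases Finset.mem_insert.1 this with h' | h'
      · exact hqs' h'
      · exact (Finset.mem_erase.1 h').1 rfl
    · have hAD : A \ insert s (A.erase q) = {q} := by
        ext a
        simp only [Finset.mem_sdiff, Finset.mem_insert, Finset.mem_erase, Finset.mem_singleton]
        constructor
        · rintro ⟨ha, hna⟩
          by_contra haq
          exact hna (Or.inr ⟨haq, ha⟩)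
        · rintro rfl
          exact ⟨hq, fun hh => by
            rcases hh with hh | hh
            · exact hqs' hh
            · exact hh.1 rfl⟩
      rw [h, hAB] at hAD
      have : p ∈ ({q} : Finset V) := hAD ▸ Finset.mem_insert_self p {q}
      exact hpq (Finset.mem_singleton.1 this)
    · exact ins_ne hq hp hs hr (Or.inl hpq.symm) (h.trans h1)
    · exact ins_ne hq hp hs hs (Or.inl hpq.symm) (h.trans h2)
    · exact ins_ne hq hq hs hr (Or.inr hrs.symm) (h.trans h3)
  unfold Dominates at hnotdom
  push_neg at hnotdom
  obtain ⟨w, hw⟩ := hnotdom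
  have hw' : ∀ d, d ∈ insert s (A.erase q) → ¬(d = w ∨ G.Adj d w) := by
    intro d hd hh
    rcases hh with hh | hh
    · exact (hw d hd).1 hh
    · exact (hw d hd).2 hh
  have hqw : q = w ∨ G.Adj q w := by
    obtain ⟨d, hd, hdw⟩ := hA.1 w
    by_cases hdq : d = q
    · exact hdq ▸ hdw
    · exact absurd hdw (hw' d (Finset.mem_insert.2 (Or.inr (Finset.mem_erase.2 ⟨hdq, hd⟩))))
  rcases hqw with rfl | hqw
  · exact hw' s (Finset.mem_insert_self _ _) (Or.inr hqs.symm)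
  · have hrw : r = w ∨ G.Adj r w := by
      obtain ⟨d, hd, hdw⟩ := hD3dom w
      rw [h3] at hd
      rcases Finset.mem_insert.1 hd with rfl | hd'
      · exact hdw
      · exact absurd hdw (hw' d (Finset.mem_insert.2 (Or.inr hd')))
    rcases hrw with rfl | hrw
    · exact hw' p (Finset.mem_insert.2 (Or.inr (Finset.mem_erase.2 ⟨hpq, hp⟩))) (Or.inr hpr)
    · exact no_tri col hqw hqr hrw.symm

/-- Structure dichotomy in the case `|A \ B| = 1`. -/
lemma dichot {A B C : Finset V} {α β x y u v : V}
    (hαA : α ∈ A) (hαB : α ∉ B) (hβA : β ∉ A)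
    (hB : B = insert β (A.erase α))
    (hxA : x ∈ A) (hyA : y ∉ A) (hC : C = insert y (A.erase x))
    (huB : u ∈ B) (huC : u ∉ C) (hvC : v ∈ C) (hvB : v ∉ B)
    (hCvB : C = insert v (B.erase u)) :
    x = α ∨ (y = β ∧ v = α ∧ u = x) := by
  have hyAx : y ∉ A.erase x := fun h => hyA (Finset.mem_erase.1 h).2
  have hβAα : β ∉ A.erase α := fun h => hβA (Finset.mem_erase.1 h).2
  by_cases hyv : y = v
  · -- type 1
    left
    have hvBu : v ∉ B.erase u := fun h => hvB (Finset.mem_erase.1 h).2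
    have e1 : A.erase x = B.erase u := by
      have := congrArg (fun S => Finset.erase S v) hCvB
      rw [Finset.erase_insert hvBu] at this
      rw [← this, ← hyv, hC, Finset.erase_insert hyAx]
    by_contra hxα
    have h1 : α ∈ B.erase u := e1 ▸ Finset.mem_erase.2 ⟨Ne.symm hxα, hαA⟩
    exact hαB (Finset.mem_erase.1 h1).2
  · -- type 2
    right
    have hyC : y ∈ C := hC ▸ Finset.mem_insert_self _ _
    have hyB : y ∈ B := by
      rw [hCvB] at hyC
      rcases Finset.mem_insert.1 hyC with h | h
      · exact absurd h hyv
      · exact (Finset.mem_erase.1 h).2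
    have hyβ : y = β := by
      rw [hB] at hyB
      rcases Finset.mem_insert.1 hyB with h | h
      · exact h
      · exact absurd (Finset.mem_erase.1 h).2 hyA
    have hvC' : v ∈ insert y (A.erase x) := hC ▸ hvC
    have hvA : v ∈ A.erase x := by
      rcases Finset.mem_insert.1 hvC' with h | h
      · exact absurd h.symm hyv
      · exact h
    have hvα : v = α := by
      have hvA' : v ∈ A := (Finset.mem_erase.1 hvA).2
      by_contra hvα
      exact hvB (hB ▸ Finset.mem_insert.2 (Or.inr (Finset.mem_erase.2 ⟨hvα, hvA'⟩)))
    have huβ : u ≠ β := by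
      intro h
      exact huC (h ▸ hyβ ▸ hyC)
    have huA : u ∈ A.erase α := by
      rw [hB] at huB
      rcases Finset.mem_insert.1 huB with h | h
      · exact absurd h huβ
      · exact h
    have hux : u = x := by
      by_contra hux
      exact huC (hC ▸ Finset.mem_insert.2
        (Or.inr (Finset.mem_erase.2 ⟨hux, (Finset.mem_erase.1 huA).2⟩)))
    exact ⟨hyβ, hvα, hux⟩
end helpers

set_option maxHeartbeats 1600000 in
theorem stmt_4 {V : Type*} [Fintype V] [DecidableEq V] (G : SimpleGraph V)
    (hbip : G.Colorable 2) :
    ¬ Nonempty (slideGammaGraph G ≃g completeBipartiteGraph (Fin 2) (Fin 3)) := by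
  rintro ⟨e⟩
  obtain ⟨col⟩ := hbip
  set f := e.symm with hf
  set A : Finset V := (f (Sum.inl 0)).1 with hAdef
  set B : Finset V := (f (Sum.inl 1)).1 with hBdef
  set C : Fin 3 → Finset V := fun i => (f (Sum.inr i)).1 with hCdef
  have hA : IsGammaSet G A := (f (Sum.inl 0)).2
  have hB : IsGammaSet G B := (f (Sum.inl 1)).2
  have hC : ∀ i, IsGammaSet G (C i) := fun i => (f (Sum.inr i)).2
  have hinj : ∀ a b : (Fin 2) ⊕ (Fin 3), (f a).1 = (f b).1 → a = b := fun a b h =>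
    f.toEquiv.injective (Subtype.ext h)
  have hABne : A ≠ B := fun h => absurd (hinj _ _ h) (by decide)
  have hCCne : ∀ i j : Fin 3, i ≠ j → C i ≠ C j := fun i j hij h =>
    hij (Sum.inr.inj (hinj _ _ h))
  have hadjf : ∀ a b, (completeBipartiteGraph (Fin 2) (Fin 3)).Adj a b →
      SlideRel G (f a).1 (f b).1 := by
    intro a b hab
    have h1 : (slideGammaGraph G).Adj (f a) (f b) := by
      rw [SimpleGraph.Iso.map_adj_iff]; exact hab
    rcases (SimpleGraph.fromRel_adj _ _ _).1 h1 with ⟨-, h | h⟩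
    · exact h
    · exact h.symm'
  have hnadjf : ∀ a b, a ≠ b → ¬ (completeBipartiteGraph (Fin 2) (Fin 3)).Adj a b →
      ¬ SlideRel G (f a).1 (f b).1 := by
    intro a b hab hnadj hsl
    apply hnadj
    rw [← SimpleGraph.Iso.map_adj_iff f]
    exact (SimpleGraph.fromRel_adj _ _ _).2 ⟨fun h => hab (f.toEquiv.injective h), Or.inl hsl⟩
  have hAC : ∀ i, SlideRel G A (C i) := fun i => hadjf (Sum.inl 0) (Sum.inr i) (by simp)
  have hBC : ∀ i, SlideRel G B (C i) := fun i => hadjf (Sum.inl 1) (Sum.inr i) (by simp)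
  have hnAB : ¬ SlideRel G A B := hnadjf (Sum.inl 0) (Sum.inl 1) (by decide) (by simp)
  have hall : ∀ D : Finset V, IsGammaSet G D → D = A ∨ D = B ∨ D = C 0 ∨ D = C 1 ∨ D = C 2 := by
    intro D hD
    have h0 : (⟨D, hD⟩ : {D : Finset V // IsGammaSet G D}) = f (e ⟨D, hD⟩) :=
      (e.symm_apply_apply _).symm
    rcases hee : e ⟨D, hD⟩ with a | a
    · rw [hee] at h0
      fin_cases a
      · exact Or.inl (congrArg Subtype.val h0)
      · exact Or.inr (Or.inl (congrArg Subtype.val h0))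
    · rw [hee] at h0
      fin_cases a
      · exact Or.inr (Or.inr (Or.inl (congrArg Subtype.val h0)))
      · exact Or.inr (Or.inr (Or.inr (Or.inl (congrArg Subtype.val h0))))
      · exact Or.inr (Or.inr (Or.inr (Or.inr (congrArg Subtype.val h0))))
  have hACs := fun i => slide_struct (hAC i)
  choose x y hxA hxC hyC hyA hxy hCx hAx using hACs
  have hBCs := fun i => slide_struct (hBC i)
  choose u v huB huC hvC hvB huv hCv hBv using hBCs
  clear hAdef hBdef hCdef hf
  clear_value A B C f
  clear hinj hadjf hnadjf hAC hBC e f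
  have hcardAB : A.card = B.card := le_antisymm (hA.2 B hB.1) (hB.2 A hA.1)
  have hsub : A \ B ⊆ {x 0, v 0} := by
    intro a ha
    rw [Finset.mem_sdiff] at ha
    by_cases hax : a = x 0
    · simp [hax]
    · have haC : a ∈ C 0 := by
        rw [hCx 0]; exact Finset.mem_insert.2 (Or.inr (Finset.mem_erase.2 ⟨hax, ha.1⟩))
      rw [hCv 0] at haC
      rcases Finset.mem_insert.1 haC with h | h
      · simp [h]
      · exact absurd (Finset.mem_erase.1 h).2 ha.2
  have hABcard2 : (A \ B).card ≤ 2 := by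
    refine (Finset.card_le_card hsub).trans ?_
    refine (Finset.card_insert_le _ _).trans ?_
    simp
  have hABnonempty : (A \ B).Nonempty := by
    rw [Finset.sdiff_nonempty]
    intro hsub'
    exact hABne (Finset.eq_of_subset_of_card_le hsub' (le_of_eq hcardAB.symm))
  have h12 : (A \ B).card = 1 ∨ (A \ B).card = 2 := by
    have := Finset.card_pos.2 hABnonempty
    omega
  rcases h12 with hcase | hcase
  · -- |A \ B| = 1
    obtain ⟨α, hαdef⟩ := Finset.card_eq_one.1 hcase
    have hBAcard : (B \ A).card = 1 := by
      rw [← Finset.card_sdiff_comm hcardAB]; exact hcase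
    obtain ⟨β, hβdef⟩ := Finset.card_eq_one.1 hBAcard
    have hαAB : α ∈ A \ B := by rw [hαdef]; exact Finset.mem_singleton_self α
    have hβBA : β ∈ B \ A := by rw [hβdef]; exact Finset.mem_singleton_self β
    have hαA : α ∈ A := (Finset.mem_sdiff.1 hαAB).1
    have hαB : α ∉ B := (Finset.mem_sdiff.1 hαAB).2
    have hβB : β ∈ B := (Finset.mem_sdiff.1 hβBA).1
    have hβA : β ∉ A := (Finset.mem_sdiff.1 hβBA).2
    have hBform : B = insert β (A.erase α) := by
      ext a
      simp only [Finset.mem_insert, Finset.mem_erase]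
      constructor
      · intro haB
        by_cases haA : a ∈ A
        · exact Or.inr ⟨fun h => hαB (h ▸ haB), haA⟩
        · have h1 : a ∈ B \ A := Finset.mem_sdiff.2 ⟨haB, haA⟩
          rw [hβdef] at h1
          exact Or.inl (Finset.mem_singleton.1 h1)
      · intro h
        rcases h with rfl | ⟨haα, haA⟩
        · exact hβB
        · by_contra haB
          have h1 : a ∈ A \ B := Finset.mem_sdiff.2 ⟨haA, haB⟩
          rw [hαdef] at h1
          exact haα (Finset.mem_singleton.1 h1)
    have hnadjαβ : ¬ G.Adj α β := by
      intro hadj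
      exact hnAB ⟨α, hαA, β, hβB, hadj, by
        rw [hBform, Finset.erase_insert (fun h => hβA (Finset.mem_erase.1 h).2)]⟩
    have hdi : ∀ i, x i = α ∨ (y i = β ∧ v i = α ∧ u i = x i) := fun i =>
      dichot hαA hαB hβA hBform (hxA i) (hyA i) (hCx i) (huB i) (huC i) (hvC i) (hvB i) (hCv i)
    have hBdom : Dominates G (insert β (A.erase α)) := hBform ▸ hB.1
    have htype1 : ∀ i j : Fin 3, i ≠ j → x i = α → x j = α → False := by
      intro i j hij hi hj
      have hdi' : Dominates G (insert (y i) (A.erase α)) := by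
        rw [← hi, ← hCx i]; exact (hC i).1
      have hdj' : Dominates G (insert (y j) (A.erase α)) := by
        rw [← hj, ← hCx j]; exact (hC j).1
      refine ML2a col hA hαA hβA hBdom hnadjαβ hdi' hdj' ?_ ?_ ?_
      · intro hyy
        exact hCCne i j hij (by rw [hCx i, hCx j, hi, hj, hyy])
      · exact hi ▸ hxy i
      · exact hj ▸ hxy j
    have htype2 : ∀ i j : Fin 3, i ≠ j → (y i = β ∧ v i = α ∧ u i = x i) →
        (y j = β ∧ v j = α ∧ u j = x j) → False := by
      rintro i j hij ⟨hyi, hvi, hui⟩ ⟨hyj, hvj, huj⟩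
      have hxx : x i ≠ x j := by
        intro hxx
        exact hCCne i j hij (by rw [hCx i, hCx j, hxx, hyi, hyj])
      have hadjiα : G.Adj (x i) α := by rw [← hui, ← hvi]; exact huv i
      have hadjiβ : G.Adj (x i) β := hyi ▸ hxy i
      have hadjjβ : G.Adj (x j) β := hyj ▸ hxy j
      have hdomi : Dominates G (insert β (A.erase (x i))) := by
        rw [← hyi, ← hCx i]; exact (hC i).1
      exact ML2b col hA (hxA i) (hxA j) hxx hαA hβA hadjiα hadjiβ hadjjβ hdomi
    rcases hdi 0 with h0 | h0 <;> rcases hdi 1 with h1 | h1 <;> rcases hdi 2 with h2 | h2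
    all_goals first
      | exact htype1 0 1 (by decide) h0 h1
      | exact htype1 0 2 (by decide) h0 h2
      | exact htype1 1 2 (by decide) h1 h2
      | exact htype2 0 1 (by decide) h0 h1
      | exact htype2 0 2 (by decide) h0 h2
      | exact htype2 1 2 (by decide) h1 h2
  · -- |A \ B| = 2
    obtain ⟨p, q, hpq, hABpq⟩ := Finset.card_eq_two.1 hcase
    have hBAcard : (B \ A).card = 2 := by
      rw [← Finset.card_sdiff_comm hcardAB]; exact hcase
    obtain ⟨r, s, hrs, hBArs⟩ := Finset.card_eq_two.1 hBAcard
    have hpAB : p ∈ A \ B := by rw [hABpq]; simp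
    have hqAB : q ∈ A \ B := by rw [hABpq]; simp
    have hrBA : r ∈ B \ A := by rw [hBArs]; simp
    have hsBA : s ∈ B \ A := by rw [hBArs]; simp
    have hpA : p ∈ A := (Finset.mem_sdiff.1 hpAB).1
    have hqA : q ∈ A := (Finset.mem_sdiff.1 hqAB).1
    have hrA : r ∉ A := (Finset.mem_sdiff.1 hrBA).2
    have hsA : s ∉ A := (Finset.mem_sdiff.1 hsBA).2
    have hkey : ∀ i : Fin 3, (x i ∈ A \ B ∧ v i ∈ A \ B ∧ x i ≠ v i) ∧
        (y i ∈ B \ A ∧ u i ∈ B \ A ∧ y i ≠ u i) := by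
      intro i
      have hvy : v i ≠ y i := by
        intro hvy
        have hyAx : y i ∉ A.erase (x i) := fun h => hyA i (Finset.mem_erase.1 h).2
        have hvBu : v i ∉ B.erase (u i) := fun h => hvB i (Finset.mem_erase.1 h).2
        have h1 := congrArg (fun S => Finset.erase S (y i)) (hCx i)
        rw [Finset.erase_insert hyAx] at h1
        have h2 := congrArg (fun S => Finset.erase S (v i)) (hCv i)
        rw [Finset.erase_insert hvBu] at h2
        rw [hvy] at h2
        have e1 : A.erase (x i) = B.erase (u i) := by rw [← h1, ← h2]
        have hsubA : A \ B ⊆ {x i} := by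
          intro a ha
          rw [Finset.mem_sdiff] at ha
          rw [Finset.mem_singleton]
          by_contra hax
          exact ha.2 (Finset.mem_erase.1 (e1 ▸ Finset.mem_erase.2 ⟨hax, ha.1⟩)).2
        have hle := Finset.card_le_card hsubA
        rw [hcase, Finset.card_singleton] at hle
        omega
      have hvAx : v i ∈ A.erase (x i) := by
        have h1 : v i ∈ C i := hvC i
        rw [hCx i] at h1
        rcases Finset.mem_insert.1 h1 with h | h
        · exact absurd h hvy
        · exact h
      have hvAB : v i ∈ A \ B := Finset.mem_sdiff.2 ⟨(Finset.mem_erase.1 hvAx).2, hvB i⟩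
      have hxB : x i ∉ B := by
        intro hxB
        have hxu : x i = u i := by
          have h1 : x i ∈ B := hxB
          rw [hBv i] at h1
          rcases Finset.mem_insert.1 h1 with h | h
          · exact h
          · exact absurd (Finset.mem_erase.1 h).2 (hxC i)
        have hsubA : A \ B ⊆ {v i} := by
          intro a ha
          rw [Finset.mem_sdiff] at ha
          rw [Finset.mem_singleton]
          have hax : a ≠ x i := fun h => ha.2 (h ▸ hxB)
          have h1 : a ∈ C i := by
            rw [hCx i]; exact Finset.mem_insert.2 (Or.inr (Finset.mem_erase.2 ⟨hax, ha.1⟩))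
          rw [hCv i] at h1
          rcases Finset.mem_insert.1 h1 with h | h
          · exact h
          · exact absurd (Finset.mem_erase.1 h).2 ha.2
        have hle := Finset.card_le_card hsubA
        rw [hcase, Finset.card_singleton] at hle
        omega
      have hxAB : x i ∈ A \ B := Finset.mem_sdiff.2 ⟨hxA i, hxB⟩
      have hxv : x i ≠ v i := fun h => (Finset.mem_erase.1 hvAx).1 h.symm
      have hyB : y i ∈ B := by
        have h1 : y i ∈ C i := hyC i
        rw [hCv i] at h1
        rcases Finset.mem_insert.1 h1 with h | h
        · exact absurd h.symm hvy
        · exact (Finset.mem_erase.1 h).2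
      have hyBA : y i ∈ B \ A := Finset.mem_sdiff.2 ⟨hyB, hyA i⟩
      have huA : u i ∉ A := by
        intro huA'
        have hux : u i ≠ x i := fun h => hxB (h ▸ huB i)
        exact huC i (by
          rw [hCx i]; exact Finset.mem_insert.2 (Or.inr (Finset.mem_erase.2 ⟨hux, huA'⟩)))
      have huBA : u i ∈ B \ A := Finset.mem_sdiff.2 ⟨huB i, huA⟩
      have hyu : y i ≠ u i := fun h => huC i (h ▸ hyC i)
      exact ⟨⟨hxAB, hvAB, hxv⟩, ⟨hyBA, huBA, hyu⟩⟩
    have hPQ : ∀ i : Fin 3, (x i = p ∧ v i = q ∨ x i = q ∧ v i = p) ∧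
        (y i = r ∧ u i = s ∨ y i = s ∧ u i = r) := by
      intro i
      obtain ⟨⟨hxAB, hvAB, hxv⟩, hyBA, huBA, hyu⟩ := hkey i
      rw [hABpq] at hxAB hvAB
      rw [hBArs] at hyBA huBA
      constructor
      · rcases Finset.mem_insert.1 hxAB with h | h
        · refine Or.inl ⟨h, ?_⟩
          rcases Finset.mem_insert.1 hvAB with h' | h'
          · exact absurd (h.trans h'.symm) hxv
          · exact Finset.mem_singleton.1 h'
        · refine Or.inr ⟨Finset.mem_singleton.1 h, ?_⟩
          rcases Finset.mem_insert.1 hvAB with h' | h'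
          · exact h'
          · exact absurd ((Finset.mem_singleton.1 h).trans
              (Finset.mem_singleton.1 h').symm) hxv
      · rcases Finset.mem_insert.1 hyBA with h | h
        · refine Or.inl ⟨h, ?_⟩
          rcases Finset.mem_insert.1 huBA with h' | h'
          · exact absurd (h.trans h'.symm) hyu
          · exact Finset.mem_singleton.1 h'
        · refine Or.inr ⟨Finset.mem_singleton.1 h, ?_⟩
          rcases Finset.mem_insert.1 huBA with h' | h'
          · exact h'
          · exact absurd ((Finset.mem_singleton.1 h).trans
              (Finset.mem_singleton.1 h').symm) hyu
    have hABqp : A \ B = {q, p} := by rw [hABpq, Finset.pair_comm]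
    have hc0 := hCx 0; have hc1 := hCx 1; have hc2 := hCx 2
    have e0 := hxy 0; have e1 := hxy 1; have e2 := hxy 2
    have f0 := huv 0; have f1 := huv 1; have f2 := huv 2
    obtain ⟨hP0, hQ0⟩ := hPQ 0
    obtain ⟨hP1, hQ1⟩ := hPQ 1
    obtain ⟨hP2, hQ2⟩ := hPQ 2
    rcases hP0 with ⟨hx0, hv0⟩ | ⟨hx0, hv0⟩ <;> rcases hQ0 with ⟨hy0, hu0⟩ | ⟨hy0, hu0⟩ <;>
      rcases hP1 with ⟨hx1, hv1⟩ | ⟨hx1, hv1⟩ <;> rcases hQ1 with ⟨hy1, hu1⟩ | ⟨hy1, hu1⟩ <;>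
      rcases hP2 with ⟨hx2, hv2⟩ | ⟨hx2, hv2⟩ <;> rcases hQ2 with ⟨hy2, hu2⟩ | ⟨hy2, hu2⟩ <;>
      rw [hx0, hy0] at hc0 e0 <;> rw [hu0, hv0] at f0 <;>
      rw [hx1, hy1] at hc1 e1 <;> rw [hu1, hv1] at f1 <;>
      rw [hx2, hy2] at hc2 e2 <;> rw [hu2, hv2] at f2
    all_goals first
      | exact hCCne 0 1 (by decide) (hc0.trans hc1.symm)
      | exact hCCne 0 2 (by decide) (hc0.trans hc2.symm)
      | exact hCCne 1 2 (by decide) (hc1.trans hc2.symm)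
      | exact ML4 col A B _ _ _ hA hpA hqA hpq hrA hsA hrs hABpq
          (by first | assumption | exact SimpleGraph.Adj.symm (by assumption))
          (by first | assumption | exact SimpleGraph.Adj.symm (by assumption))
          (by first | assumption | exact SimpleGraph.Adj.symm (by assumption))
          (by first | assumption | exact SimpleGraph.Adj.symm (by assumption))
          (by assumption) (by assumption) (by assumption)
          (by first | exact (hC 0).1 | exact (hC 1).1 | exact (hC 2).1)
          (fun D hD => by rcases hall D hD with h | h | h | h | h <;> tauto)
      | exact ML4 col A B _ _ _ hA hpA hqA hpq hsA hrA hrs.symm hABpq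
          (by first | assumption | exact SimpleGraph.Adj.symm (by assumption))
          (by first | assumption | exact SimpleGraph.Adj.symm (by assumption))
          (by first | assumption | exact SimpleGraph.Adj.symm (by assumption))
          (by first | assumption | exact SimpleGraph.Adj.symm (by assumption))
          (by assumption) (by assumption) (by assumption)
          (by first | exact (hC 0).1 | exact (hC 1).1 | exact (hC 2).1)
          (fun D hD => by rcases hall D hD with h | h | h | h | h <;> tauto)
      | exact ML4 col A B _ _ _ hA hqA hpA hpq.symm hrA hsA hrs hABqp
          (by first | assumption | exact SimpleGraph.Adj.symm (by assumption))
          (by first | assumption | exact SimpleGraph.Adj.symm (by assumption))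
          (by first | assumption | exact SimpleGraph.Adj.symm (by assumption))
          (by first | assumption | exact SimpleGraph.Adj.symm (by assumption))
          (by assumption) (by assumption) (by assumption)
          (by first | exact (hC 0).1 | exact (hC 1).1 | exact (hC 2).1)
          (fun D hD => by rcases hall D hD with h | h | h | h | h <;> tauto)
      | exact ML4 col A B _ _ _ hA hqA hpA hpq.symm hsA hrA hrs.symm hABqp
          (by first | assumption | exact SimpleGraph.Adj.symm (by assumption))
          (by first | assumption | exact SimpleGraph.Adj.symm (by assumption))
          (by first | assumption | exact SimpleGraph.Adj.symm (by assumption))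
          (by first | assumption | exact SimpleGraph.Adj.symm (by assumption))
          (by assumption) (by assumption) (by assumption)
          (by first | exact (hC 0).1 | exact (hC 1).1 | exact (hC 2).1)
          (fun D hD => by rcases hall D hD with h | h | h | h | h <;> tauto)
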